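/- For every integer p ≥ 4, the maximum order of an induced forest of the generalized Sierpiński triangle graph Ŝ_p^1 equals 3p/2 if p is even, and equals (3p − 1)/2 if p is odd. -/

import Mathlib

open SimpleGraph

/-- The Sierpinski graph `S_p^n` on vertex set `P^n`: two distinct vertices are adjacent
iff they can be written as `s i j^(d-1)` and `s j i^(d-1)`. -/
def sierpinski (p n : Nat) : SimpleGraph (Fin n → Fin p) :=
  SimpleGraph.fromRel (fun u v =>
    ∃ t : Fin n, ∃ i j : Fin p, i ≠ j ∧
      (∀ k, k < t → u k = v k) ∧ u t = i ∧ v t = j ∧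
      (∀ k, t < k → u k = j ∧ v k = i))

/-- `X` is a feedback vertex set of `G` if deleting it leaves an acyclic graph. -/
def IsFeedbackVertexSet {V : Type*} (G : SimpleGraph V) (X : Set V) : Prop :=
  (G.induce Xᶜ).IsAcyclic

/-- The feedback vertex number: the minimum cardinality of a feedback vertex set. -/
noncomputable def feedbackNumber {V : Type*} (G : SimpleGraph V) : Nat :=
  sInf {k | ∃ X : Finset V, X.card = k ∧ IsFeedbackVertexSet G ↑X}

/-- The maximum number of vertices of an induced forest of `G`. -/
noncomputable def maxInducedForest {V : Type*} (G : SimpleGraph V) : Nat :=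
  sSup {k | ∃ Y : Finset V, Y.card = k ∧ (G.induce (↑Y : Set V)).IsAcyclic}

/-- The non-clique edges of `S_p^(n+1)`: edges `{s i j^l, s j i^l}` with `l ≥ 1`,
i.e. adjacency witnessed at a position `t` with `t < n`. -/
def nonCliqueRel (p n : Nat) (u v : Fin (n+1) → Fin p) : Prop :=
  ∃ t : Fin (n+1), (t : Nat) < n ∧ ∃ i j : Fin p, i ≠ j ∧
    (∀ k, k < t → u k = v k) ∧ u t = i ∧ v t = j ∧
    (∀ k, t < k → u k = j ∧ v k = i)

/-- The setoid identifying the two endpoints of every non-clique edge of `S_p^(n+1)`. -/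
def triSetoid (p n : Nat) : Setoid (Fin (n+1) → Fin p) :=
  Relation.EqvGen.setoid (nonCliqueRel p n)

/-- The generalized Sierpinski triangle graph: the contraction of all
non-clique edges of `S_p^(n+1)`. -/
def sierpinskiTriangle (p n : Nat) : SimpleGraph (Quotient (triSetoid p n)) where
  Adj x y := x ≠ y ∧ ∃ u v : Fin (n+1) → Fin p,
    Quotient.mk (triSetoid p n) u = x ∧ Quotient.mk (triSetoid p n) v = y ∧
    (sierpinski p (n+1)).Adj u v
  symm := ⟨by
    rintro x y ⟨hxy, u, v, hu, hv, h⟩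
    exact ⟨hxy.symm, v, u, hv, hu, h.symm⟩⟩
  loopless := ⟨by
    rintro x ⟨hxx, -⟩
    exact hxx rfl⟩

-- chunk 2
private lemma fin2_eq_of (u v : Fin 2 → Fin p) (h0 : u 0 = v 0) (h1 : u 1 = v 1) : u = v := by
  funext k
  fin_cases k <;> assumption

private lemma eqvgen_iff {p : Nat} (u v : Fin 2 → Fin p) :
    Relation.EqvGen (nonCliqueRel p 1) u v ↔ s(u 0, u 1) = s(v 0, v 1) := by
  constructor
  · intro h
    induction h with
    | rel a b hab =>
      obtain ⟨t, ht, i, j, hij, _, ha, hb, hgt⟩ := hab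
      have ht0 : t = 0 := Fin.ext (by simp only [Fin.val_zero]; omega)
      subst ht0
      have h1 : a 1 = j ∧ b 1 = i := hgt 1 (by simp [Fin.lt_def])
      rw [ha, hb, h1.1, h1.2]
      exact Sym2.eq_swap
    | refl a => rfl
    | symm a b _ ih => exact ih.symm
    | trans a b c _ _ ih1 ih2 => exact ih1.trans ih2
  · intro h
    rw [Sym2.eq_iff] at h
    rcases h with ⟨h0, h1⟩ | ⟨h0, h1⟩
    · rw [fin2_eq_of u v h0 h1]
      exact Relation.EqvGen.refl v
    · by_cases hd : u 0 = u 1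
      · rw [fin2_eq_of u v (hd.trans h1) (hd.symm.trans h0)]
        exact Relation.EqvGen.refl v
      · refine Relation.EqvGen.rel u v ⟨0, by norm_num, u 0, u 1, hd, ?_, rfl, h1.symm, ?_⟩
        · intro k hk
          exact absurd hk (by simp [Fin.lt_def])
        · intro k hk
          have hk1 : k = 1 := by
            apply Fin.ext
            simp only [Fin.lt_def, Fin.val_zero] at hk
            simp only [Fin.val_one]
            omega
          subst hk1
          exact ⟨rfl, h0.symm⟩

private lemma sier2_adj {p : Nat} (u v : Fin 2 → Fin p) :
    (sierpinski p 2).Adj u v ↔ u ≠ v ∧ (u 0 = v 0 ∨ (u 1 = v 0 ∧ v 1 = u 0)) := by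
  have raw : ∀ a b : Fin 2 → Fin p,
      (∃ t : Fin 2, ∃ i j : Fin p, i ≠ j ∧
        (∀ k, k < t → a k = b k) ∧ a t = i ∧ b t = j ∧
        (∀ k, t < k → a k = j ∧ b k = i)) ↔
      ((a 0 ≠ b 0 ∧ a 1 = b 0 ∧ b 1 = a 0) ∨ (a 0 = b 0 ∧ a 1 ≠ b 1)) := by
    intro a b
    constructor
    · rintro ⟨t, i, j, hij, hlt, ha, hb, hgt⟩
      fin_cases t <;> simp only [Fin.zero_eta, Fin.mk_one] at ha hb hgt hlt
      · obtain ⟨h1, h2⟩ := hgt 1 (by simp [Fin.lt_def])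
        exact Or.inl ⟨by rw [ha, hb]; exact hij, by rw [h1, hb], by rw [h2, ha]⟩
      · have h0 : a 0 = b 0 := hlt 0 (by simp [Fin.lt_def])
        exact Or.inr ⟨h0, by rw [ha, hb]; exact hij⟩
    · rintro (⟨h0, h1, h2⟩ | ⟨h0, h1⟩)
      · refine ⟨0, a 0, a 1, ?_, ?_, rfl, h1.symm, ?_⟩
        · intro h; rw [h, h1] at h0; exact h0 rfl
        · intro k hk; exact absurd hk (by simp [Fin.lt_def])
        · intro k hk
          have hk1 : k = 1 := by
            apply Fin.ext
            simp only [Fin.lt_def, Fin.val_zero] at hk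
            simp only [Fin.val_one]
            omega
          subst hk1
          exact ⟨rfl, h2⟩
      · refine ⟨1, a 1, b 1, h1, ?_, rfl, rfl, ?_⟩
        · intro k hk
          have hk0 : k = 0 := by
            apply Fin.ext
            simp only [Fin.lt_def, Fin.val_one] at hk
            simp only [Fin.val_zero]
            omega
          subst hk0
          exact h0
        · intro k hk
          exact absurd (⟨by simpa [Fin.lt_def] using hk, k.isLt⟩ : 1 < (k:ℕ) ∧ (k:ℕ) < 2) (by omega)
  rw [sierpinski, SimpleGraph.fromRel_adj, raw, raw]
  constructor
  · rintro ⟨hne, h⟩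
    refine ⟨hne, ?_⟩
    rcases h with (⟨_, h1, h2⟩ | ⟨h0, _⟩) | (⟨_, h1, h2⟩ | ⟨h0, _⟩)
    · exact Or.inr ⟨h1, h2⟩
    · exact Or.inl h0
    · exact Or.inr ⟨h2, h1⟩
    · exact Or.inl h0.symm
  · rintro ⟨hne, h⟩
    refine ⟨hne, ?_⟩
    rcases h with h0 | ⟨h1, h2⟩
    · refine Or.inl (Or.inr ⟨h0, fun h1 => hne (fin2_eq_of u v h0 h1)⟩)
    · by_cases h0 : u 0 = v 0
      · have : u 1 ≠ v 1 := by
          intro he; exact hne (fin2_eq_of u v h0 he)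
        exact Or.inl (Or.inr ⟨h0, this⟩)
      · exact Or.inl (Or.inl ⟨h0, h1, h2⟩)

private def toSym (p : Nat) : Quotient (triSetoid p 1) → Sym2 (Fin p) :=
  Quotient.lift (fun u => s(u 0, u 1)) (fun a b h => (eqvgen_iff a b).mp h)

private def symEquiv (p : Nat) : Quotient (triSetoid p 1) ≃ Sym2 (Fin p) where
  toFun := toSym p
  invFun := Sym2.lift ⟨fun a b => Quotient.mk (triSetoid p 1) ![a, b],
    fun a b => Quotient.sound ((eqvgen_iff _ _).mpr (by simp [Sym2.eq_swap]))⟩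
  left_inv := by
    intro x
    induction x using Quotient.inductionOn with
    | h u =>
      show Sym2.lift _ (toSym p (Quotient.mk _ u)) = _
      have : toSym p (Quotient.mk _ u) = s(u 0, u 1) := rfl
      rw [this, Sym2.lift_mk]
      exact Quotient.sound ((eqvgen_iff _ _).mpr (by simp))
  right_inv := by
    intro z
    induction z using Sym2.ind with
    | _ a b =>
      show toSym p (Quotient.mk _ ![a, b]) = _
      have : toSym p (Quotient.mk _ ![a, b]) = s(![a,b] 0, ![a,b] 1) := rfl
      rw [this]
      simp

private def TG (p : Nat) : SimpleGraph (Sym2 (Fin p)) where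
  Adj x y := x ≠ y ∧ ∃ m, m ∈ x ∧ m ∈ y
  symm := ⟨fun _ _ ⟨h, m, h1, h2⟩ => ⟨h.symm, m, h2, h1⟩⟩
  loopless := ⟨fun _ ⟨h, _⟩ => h rfl⟩

private lemma rep_exists {p : Nat} (u : Fin 2 → Fin p) (m : Fin p) (hm : m ∈ s(u 0, u 1)) :
    ∃ u' : Fin 2 → Fin p, Quotient.mk (triSetoid p 1) u' = Quotient.mk (triSetoid p 1) u ∧
      u' 0 = m := by
  rw [Sym2.mem_iff] at hm
  rcases hm with h | h
  · exact ⟨u, rfl, h.symm⟩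
  · refine ⟨![u 1, u 0], Quotient.sound ((eqvgen_iff _ _).mpr (by simp [Sym2.eq_swap])), by simp [h]⟩

private lemma toSym_mk {p : Nat} (u : Fin 2 → Fin p) :
    toSym p (Quotient.mk (triSetoid p 1) u) = s(u 0, u 1) := rfl

private def triIso (p : Nat) : (sierpinskiTriangle p 1) ≃g TG p where
  toEquiv := symEquiv p
  map_rel_iff' := by
    intro x y
    induction x using Quotient.inductionOn with
    | h u =>
    induction y using Quotient.inductionOn with
    | h v =>
      change (TG p).Adj (toSym p (Quotient.mk (triSetoid p 1) u))
          (toSym p (Quotient.mk (triSetoid p 1) v)) ↔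
        (sierpinskiTriangle p 1).Adj (Quotient.mk (triSetoid p 1) u)
          (Quotient.mk (triSetoid p 1) v)
      rw [toSym_mk, toSym_mk]
      constructor
      · rintro ⟨hne, m, hmx, hmy⟩
        obtain ⟨u', hqu, hu0⟩ := rep_exists u m hmx
        obtain ⟨v', hqv, hv0⟩ := rep_exists v m hmy
        have hxy : Quotient.mk (triSetoid p 1) u ≠ Quotient.mk (triSetoid p 1) v := by
          intro h
          exact hne ((eqvgen_iff u v).mp (Quotient.exact h))
        refine ⟨hxy, u', v', hqu, hqv, ?_⟩
        rw [sier2_adj]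
        refine ⟨?_, Or.inl (hu0.trans hv0.symm)⟩
        intro h
        exact hxy (hqu ▸ hqv ▸ congrArg _ h)
      · rintro ⟨hne, u', v', hqu, hqv, hadj⟩
        rw [sier2_adj] at hadj
        obtain ⟨hne', hor⟩ := hadj
        have hqu' := (eqvgen_iff u' u).mp (Quotient.exact hqu)
        have hqv' := (eqvgen_iff v' v).mp (Quotient.exact hqv)
        constructor
        · intro h
          exact hne (Quotient.sound ((eqvgen_iff u v).mpr h))
        · rcases hor with h0 | ⟨h1, h2⟩
          · exact ⟨u' 0, by rw [← hqu']; simp, by rw [← hqv', ← h0]; simp⟩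
          · exfalso
            apply hne
            rw [← hqu, ← hqv]
            exact Quotient.sound ((eqvgen_iff u' v').mpr (by rw [Sym2.eq_iff]; right; exact ⟨h2.symm, h1⟩))

private lemma isAcyclic_of_hom {A B : Type*} {G : SimpleGraph A} {H : SimpleGraph B}
    (f : G →g H) (hf : Function.Injective f) (hH : H.IsAcyclic) : G.IsAcyclic := by
  intro v c hc
  exact hH _ (hc.map hf)

private lemma forest_transfer {V W : Type*} {G : SimpleGraph V} {H : SimpleGraph W}
    (φ : G ≃g H) (k : ℕ) (h : ∃ Y : Finset V, Y.card = k ∧ (G.induce (↑Y : Set V)).IsAcyclic) :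
    ∃ Z : Finset W, Z.card = k ∧ (H.induce (↑Z : Set W)).IsAcyclic := by
  classical
  obtain ⟨Y, hk, hY⟩ := h
  refine ⟨Y.image φ, by rw [Finset.card_image_of_injective _ φ.injective, hk], ?_⟩
  have hmem : ∀ b : (↑(Y.image φ) : Set W), φ.symm b.1 ∈ (↑Y : Set V) := by
    rintro ⟨b, hb⟩
    obtain ⟨a, ha, hab⟩ := Finset.mem_image.mp (Finset.mem_coe.mp hb)
    have : φ.symm b = a := by rw [← hab]; simp
    rw [this]; exact ha
  refine isAcyclic_of_hom
    (⟨fun b => ⟨φ.symm b.1, hmem b⟩, ?_⟩ : (H.induce (↑(Y.image φ) : Set W)) →g (G.induce (↑Y : Set V)))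
    ?_ hY
  · intro a b hab
    simp only [comap_adj, Function.Embedding.coe_subtype] at hab ⊢
    exact φ.symm.map_adj_iff.mpr hab
  · intro a b hab
    exact Subtype.ext (φ.symm.injective (congrArg Subtype.val hab))

private lemma maxInducedForest_iso {V W : Type*} {G : SimpleGraph V} {H : SimpleGraph W}
    (φ : G ≃g H) : maxInducedForest G = maxInducedForest H := by
  unfold maxInducedForest
  congr 1
  ext k
  exact ⟨fun h => forest_transfer φ k h, fun h => forest_transfer φ.symm k h⟩

-- chunk 1 (acyclicity tools)
private lemma cycle_mid {V : Type*} {G : SimpleGraph V} {x : V} {d : G.Walk x x}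
    (hd : d.IsCycle) :
    ∃ m, m ∈ d.support ∧ G.Adj x m ∧ ∃ a b, a ≠ b ∧ G.Adj m a ∧ G.Adj m b := by
  cases d with
  | nil => exact absurd hd (SimpleGraph.Walk.IsCycle.not_of_nil)
  | cons h1 d1 =>
    cases d1 with
    | nil => have := hd.three_le_length; simp at this
    | cons h2 d2 =>
      cases d2 with
      | nil => have := hd.three_le_length; simp at this
      | cons h3 d3 =>
        rename_i y z w
        refine ⟨y, by simp, h1, x, z, ?_, h1.symm, h2⟩
        intro hxz
        have hnd := hd.2
        simp only [Walk.support_cons, List.tail_cons] at hnd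
        have hz : z ∉ d3.support := by
          have := (List.nodup_cons.mp hnd).2
          exact (List.nodup_cons.mp this).1
        exact hz (hxz ▸ d3.end_mem_support)

private lemma acyclic_of_local {V : Type*} {G : SimpleGraph V}
    (h : ∀ u v, G.Adj u v → (∃ x y, x ≠ y ∧ G.Adj u x ∧ G.Adj u y) →
      (∃ x y, x ≠ y ∧ G.Adj v x ∧ G.Adj v y) → False) : G.IsAcyclic := by
  classical
  intro v c hc
  obtain ⟨m, hmem, hvm, htwo⟩ := cycle_mid hc
  obtain ⟨m2, _, hmm2, htwo2⟩ := cycle_mid (hc.rotate hmem)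
  exact h m m2 hmm2 htwo htwo2

private lemma no_triangle {V : Type*} {G : SimpleGraph V} (hG : G.IsAcyclic)
    {a b c : V} (hab : G.Adj a b) (hbc : G.Adj b c) (hca : G.Adj c a) : False := by
  have hcyc : (Walk.cons hab (Walk.cons hbc (Walk.cons hca Walk.nil))).IsCycle := by
    simp [Walk.isCycle_def, Walk.isTrail_def, hab.ne, hbc.ne, hca.ne, hab.ne',
      hbc.ne', hca.ne', Sym2.eq_iff]
  exact hG _ hcyc

-- chunk 3 (counting)
private lemma diag_exists {p : Nat} (y : Sym2 (Fin p)) (h : y.IsDiag) : ∃ a, y = s(a, a) := by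
  induction y using Sym2.ind with
  | _ i j =>
    rw [Sym2.mk_isDiag_iff] at h
    exact ⟨i, by rw [h]⟩

private lemma count_mem {p : Nat} (y : Sym2 (Fin p)) :
    (Finset.univ.filter (fun a => a ∈ y)).card = if y.IsDiag then 1 else 2 := by
  induction y using Sym2.ind with
  | _ i j =>
    have he : Finset.univ.filter (fun a => a ∈ s(i,j)) = {i, j} := by
      ext a
      simp [Sym2.mem_iff]
    rw [he]
    by_cases h : i = j
    · subst h; simp
    · rw [Finset.card_pair h]
      simp [Sym2.mk_isDiag_iff, h]

private lemma TG_upper {p : Nat} (Y : Finset (Sym2 (Fin p)))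
    (hY : ((TG p).induce (↑Y : Set (Sym2 (Fin p)))).IsAcyclic) :
    2 * Y.card ≤ 2 * p + (Y.filter Sym2.IsDiag).card ∧ (Y.filter Sym2.IsDiag).card ≤ p := by
  have stepA : ∀ a : Fin p, (Y.filter (fun y => a ∈ y)).card ≤ 2 := by
    intro a
    by_contra hcon
    push_neg at hcon
    obtain ⟨x, hx, y, hy, z, hz, hxy, hxz, hyz⟩ := Finset.two_lt_card.mp hcon
    obtain ⟨hxY, hax⟩ := Finset.mem_filter.mp hx
    obtain ⟨hyY, hay⟩ := Finset.mem_filter.mp hy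
    obtain ⟨hzY, haz⟩ := Finset.mem_filter.mp hz
    have axy : ((TG p).induce (↑Y : Set (Sym2 (Fin p)))).Adj ⟨x, hxY⟩ ⟨y, hyY⟩ :=
      ⟨hxy, a, hax, hay⟩
    have ayz : ((TG p).induce (↑Y : Set (Sym2 (Fin p)))).Adj ⟨y, hyY⟩ ⟨z, hzY⟩ :=
      ⟨hyz, a, hay, haz⟩
    have azx : ((TG p).induce (↑Y : Set (Sym2 (Fin p)))).Adj ⟨z, hzY⟩ ⟨x, hxY⟩ :=
      ⟨fun h => hxz h.symm, a, haz, hax⟩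
    exact no_triangle hY axy ayz azx
  have key : ∑ y ∈ Y, (if y.IsDiag then 1 else 2) ≤ 2 * p := by
    calc ∑ y ∈ Y, (if y.IsDiag then 1 else 2)
        = ∑ y ∈ Y, (Finset.univ.filter (fun a : Fin p => a ∈ y)).card := by
          exact Finset.sum_congr rfl (fun y _ => (count_mem y).symm)
      _ = ∑ y ∈ Y, ∑ a : Fin p, (if a ∈ y then 1 else 0) := by
          exact Finset.sum_congr rfl (fun y _ => Finset.card_filter _ _)
      _ = ∑ a : Fin p, ∑ y ∈ Y, (if a ∈ y then 1 else 0) := Finset.sum_comm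
      _ = ∑ a : Fin p, (Y.filter (fun y => a ∈ y)).card := by
          exact Finset.sum_congr rfl (fun a _ => (Finset.card_filter _ _).symm)
      _ ≤ ∑ _a : Fin p, 2 := Finset.sum_le_sum (fun a _ => stepA a)
      _ = 2 * p := by simp [Finset.sum_const, Fintype.card_fin, mul_comm]
  have split : ∑ y ∈ Y, (if y.IsDiag then 1 else 2)
      = (Y.filter Sym2.IsDiag).card + 2 * (Y.filter (fun y => ¬ y.IsDiag)).card := by
    rw [Finset.sum_ite]
    simp [Finset.sum_const, smul_eq_mul, mul_comm]
  have hcard : (Y.filter Sym2.IsDiag).card + (Y.filter (fun y => ¬ y.IsDiag)).card = Y.card :=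
    Finset.card_filter_add_card_filter_not Sym2.IsDiag
  have hD : (Y.filter Sym2.IsDiag).card ≤ p := by
    have hsub : Y.filter Sym2.IsDiag ⊆ Finset.univ.image (fun a : Fin p => s(a, a)) := by
      intro y hy
      obtain ⟨a, ha⟩ := diag_exists y (Finset.mem_filter.mp hy).2
      exact Finset.mem_image.mpr ⟨a, Finset.mem_univ a, ha.symm⟩
    calc (Y.filter Sym2.IsDiag).card ≤ _ := Finset.card_le_card hsub
      _ ≤ (Finset.univ : Finset (Fin p)).card := Finset.card_image_le
      _ = p := by simp
  refine ⟨?_, hD⟩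
  omega

-- chunk 4 (lower bound construction)
private def Epart (p : Nat) : Finset (Fin p) :=
  Finset.univ.filter (fun a => a.val % 2 = 0 ∧ a.val + 1 < p)

private def gp {p : Nat} (a : Fin p) : Sym2 (Fin p) :=
  if h : a.val + 1 < p then s(a, ⟨a.val + 1, h⟩) else s(a, a)

private lemma Epart_mem {p : Nat} {a : Fin p} (ha : a ∈ Epart p) :
    a.val % 2 = 0 ∧ a.val + 1 < p := (Finset.mem_filter.mp ha).2

private lemma gp_spec {p : Nat} {a : Fin p} (ha : a ∈ Epart p) :
    ∃ b : Fin p, b.val = a.val + 1 ∧ gp a = s(a, b) := by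
  obtain ⟨_, h⟩ := Epart_mem ha
  exact ⟨⟨a.val + 1, h⟩, rfl, dif_pos h⟩

private lemma gp_ne_diag {p : Nat} {a : Fin p} (ha : a ∈ Epart p) (c : Fin p) :
    gp a ≠ s(c, c) := by
  obtain ⟨b, hb, hgp⟩ := gp_spec ha
  rw [hgp]
  intro hq
  rw [Sym2.eq_iff] at hq
  rcases hq with ⟨h1, h2⟩ | ⟨h1, h2⟩ <;>
    · rw [← h1] at h2
      have := congrArg Fin.val h2
      omega

private def Ylow (p : Nat) : Finset (Sym2 (Fin p)) :=
  Finset.univ.image (fun a : Fin p => s(a, a)) ∪ (Epart p).image gp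

private lemma Ylow_mem {p : Nat} {y : Sym2 (Fin p)} (hy : y ∈ Ylow p) :
    (∃ c, y = s(c, c)) ∨ (∃ a ∈ Epart p, y = gp a) := by
  rcases Finset.mem_union.mp hy with h | h
  · obtain ⟨a, _, ha⟩ := Finset.mem_image.mp h
    exact Or.inl ⟨a, ha.symm⟩
  · obtain ⟨a, ha, hga⟩ := Finset.mem_image.mp h
    exact Or.inr ⟨a, ha, hga.symm⟩

private lemma Ylow_card {p : Nat} : (Ylow p).card = p + p / 2 := by
  have hE : (Epart p).card = p / 2 := by
    have := Finset.card_bij' (s := Epart p) (t := Finset.range (p / 2))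
      (i := fun a _ => a.val / 2)
      (j := fun k hk => (⟨2 * k, by rw [Finset.mem_range] at hk; omega⟩ : Fin p))
      (hi := by
        intro a ha
        obtain ⟨h1, h2⟩ := Epart_mem ha
        rw [Finset.mem_range]
        show a.val / 2 < p / 2
        omega)
      (hj := by
        intro k hk
        rw [Finset.mem_range] at hk
        simp only [Epart, Finset.mem_filter, Finset.mem_univ, true_and]
        show 2 * k % 2 = 0 ∧ 2 * k + 1 < p
        omega)
      (left_inv := by
        intro a ha
        obtain ⟨h1, h2⟩ := Epart_mem ha
        apply Fin.ext
        show 2 * (a.val / 2) = a.val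
        omega)
      (right_inv := by
        intro k hk
        rw [Finset.mem_range] at hk
        show 2 * k / 2 = k
        omega)
    rw [this, Finset.card_range]
  have hdisj : Disjoint (Finset.univ.image (fun a : Fin p => s(a, a))) ((Epart p).image gp) := by
    rw [Finset.disjoint_left]
    intro y hy hy'
    obtain ⟨c, _, hc⟩ := Finset.mem_image.mp hy
    obtain ⟨a, ha, hga⟩ := Finset.mem_image.mp hy'
    exact gp_ne_diag ha c (hga.trans hc.symm)
  have hinj : Set.InjOn gp (↑(Epart p) : Set (Fin p)) := by
    intro a ha b hb hab
    obtain ⟨a', ha', hga⟩ := gp_spec (Finset.mem_coe.mp ha)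
    obtain ⟨b', hb', hgb⟩ := gp_spec (Finset.mem_coe.mp hb)
    rw [hga, hgb, Sym2.eq_iff] at hab
    rcases hab with ⟨h1, _⟩ | ⟨h1, h2⟩
    · exact h1
    · apply Fin.ext
      have e1 := congrArg Fin.val h1
      have e2 := congrArg Fin.val h2
      omega
  rw [Ylow, Finset.card_union_of_disjoint hdisj,
    Finset.card_image_of_injective _ (fun a b h => by simpa [Sym2.eq_iff] using h),
    Finset.card_image_of_injOn hinj, hE]
  simp

private lemma Ylow_K1 {p : Nat} (c : Fin p) {w1 w2 : Sym2 (Fin p)}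
    (h1 : w1 ∈ Ylow p) (h2 : w2 ∈ Ylow p)
    (a1 : (TG p).Adj s(c, c) w1) (a2 : (TG p).Adj s(c, c) w2) : w1 = w2 := by
  have hNbr : ∀ w ∈ Ylow p, (TG p).Adj s(c, c) w →
      ∃ a, a ∈ Epart p ∧ w = gp a ∧ 2 * (c.val / 2) = a.val := by
    intro w hw ⟨hne, m, hm1, hm2⟩
    have hmc : m = c := by
      rcases Sym2.mem_iff.mp hm1 with h | h <;> exact h
    subst hmc
    rcases Ylow_mem hw with ⟨d, hd⟩ | ⟨a, ha, hga⟩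
    · exfalso
      subst hd
      rcases Sym2.mem_iff.mp hm2 with h | h <;> · subst h; exact hne rfl
    · refine ⟨a, ha, hga, ?_⟩
      obtain ⟨hpar, _⟩ := Epart_mem ha
      obtain ⟨b, hb, hgp⟩ := gp_spec ha
      rw [hga, hgp] at hm2
      rcases Sym2.mem_iff.mp hm2 with h | h
      · have := congrArg Fin.val h
        omega
      · have := congrArg Fin.val h
        omega
  obtain ⟨x1, hx1, he1, hv1⟩ := hNbr w1 h1 a1
  obtain ⟨x2, hx2, he2, hv2⟩ := hNbr w2 h2 a2
  have : x1 = x2 := Fin.ext (by omega)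
  rw [he1, he2, this]

private lemma Ylow_K2 {p : Nat} {a : Fin p} (ha : a ∈ Epart p) {w : Sym2 (Fin p)}
    (hw : w ∈ Ylow p) (hadj : (TG p).Adj (gp a) w) : ∃ c, w = s(c, c) := by
  obtain ⟨hne, m, hm1, hm2⟩ := hadj
  rcases Ylow_mem hw with h | ⟨b, hb, hgb⟩
  · exact h
  · exfalso
    obtain ⟨a', ha', hga'⟩ := gp_spec ha
    obtain ⟨b', hb', hgb'⟩ := gp_spec hb
    obtain ⟨hpa, _⟩ := Epart_mem ha
    obtain ⟨hpb, _⟩ := Epart_mem hb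
    rw [hga'] at hm1
    rw [hgb, hgb'] at hm2
    have hab : a = b := by
      apply Fin.ext
      rcases Sym2.mem_iff.mp hm1 with h | h <;> rcases Sym2.mem_iff.mp hm2 with h' | h' <;>
        · have e1 := congrArg Fin.val h
          have e2 := congrArg Fin.val h'
          omega
    exact hne (hgb ▸ hab ▸ rfl)

private lemma Ylow_acyclic {p : Nat} :
    ((TG p).induce (↑(Ylow p) : Set (Sym2 (Fin p)))).IsAcyclic := by
  apply acyclic_of_local
  rintro u v huv ⟨x, y, hxy, hux, huy⟩ ⟨x', y', hxy', hvx', hvy'⟩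
  have hu : u.1 ∈ Ylow p := Finset.mem_coe.mp u.2
  have hv : v.1 ∈ Ylow p := Finset.mem_coe.mp v.2
  have hxm : x.1 ∈ Ylow p := Finset.mem_coe.mp x.2
  have hym : y.1 ∈ Ylow p := Finset.mem_coe.mp y.2
  have hxm' : x'.1 ∈ Ylow p := Finset.mem_coe.mp x'.2
  have hym' : y'.1 ∈ Ylow p := Finset.mem_coe.mp y'.2
  have hux' : (TG p).Adj u.1 x.1 := hux
  have huy' : (TG p).Adj u.1 y.1 := huy
  have hvx'' : (TG p).Adj v.1 x'.1 := hvx'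
  have hvy'' : (TG p).Adj v.1 y'.1 := hvy'
  have huv' : (TG p).Adj u.1 v.1 := huv
  rcases Ylow_mem hu with ⟨c, hc⟩ | ⟨a, ha, hga⟩
  · rw [hc] at hux' huy'
    exact hxy (Subtype.ext (Ylow_K1 c hxm hym hux' huy'))
  · rcases Ylow_mem hv with ⟨c, hc⟩ | ⟨b, hb, hgb⟩
    · rw [hc] at hvx'' hvy''
      exact hxy' (Subtype.ext (Ylow_K1 c hxm' hym' hvx'' hvy''))
    · rw [hga] at huv'
      obtain ⟨c, hcw⟩ := Ylow_K2 ha hv huv'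
      exact gp_ne_diag hb c (hgb ▸ hcw)

theorem stmt18 (p : Nat) (hp : 4 ≤ p) :
    maxInducedForest (sierpinskiTriangle p 1) =
      if Even p then 3 * p / 2 else (3 * p - 1) / 2 := by
  rw [maxInducedForest_iso (triIso p)]
  unfold maxInducedForest
  set B := if Even p then 3 * p / 2 else (3 * p - 1) / 2 with hB
  have hub : ∀ k ∈ {k | ∃ Y : Finset (Sym2 (Fin p)), Y.card = k ∧
      ((TG p).induce (↑Y : Set (Sym2 (Fin p)))).IsAcyclic}, k ≤ B := by
    rintro k ⟨Y, rfl, hY⟩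
    obtain ⟨h1, h2⟩ := TG_upper Y hY
    rcases Nat.even_or_odd p with he | ho
    · rw [hB, if_pos he]
      have := Nat.even_iff.mp he
      omega
    · have hno : ¬ Even p := by
        intro h
        have := Nat.even_iff.mp h
        have := Nat.odd_iff.mp ho
        omega
      rw [hB, if_neg hno]
      have := Nat.odd_iff.mp ho
      omega
  apply le_antisymm
  · refine csSup_le ⟨0, ∅, Finset.card_empty, ?_⟩ hub
    intro v c hc
    exact absurd v.2 (by simp)
  · refine le_csSup ⟨B, fun k hk => hub k hk⟩ ?_
    refine ⟨Ylow p, ?_, Ylow_acyclic⟩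
    rw [Ylow_card, hB]
    rcases Nat.even_or_odd p with he | ho
    · rw [if_pos he]
      have := Nat.even_iff.mp he
      omega
    · have hno : ¬ Even p := by
        intro h
        have := Nat.even_iff.mp h
        have := Nat.odd_iff.mp ho
        omega
      rw [if_neg hno]
      have := Nat.odd_iff.mp ho
      omega
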